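/- Let G_{α+1/2} = ∂_t Σ_{j=1}^α h_j + ∂_x Σ_{j=1}^α (h_j u_j). Then for each α the z-moment equation ∂/∂t ( (z_{α+1/2}² − z_{α−1/2}²)/2 ) + ∂/∂x ( (z_{α+1/2}² − z_{α−1/2}²)/2 · u_α ) = h_α w_α + z_{α+1/2} G_{α+1/2} − z_{α−1/2} G_{α−1/2} holds if and only if w_α = − (1/2) ∂_x(h_α u_α) − Σ_{j=1}^{α−1} ∂_x(h_j u_j) + u_α ∂_x z_α. -/

import Mathlib

/-- ∂/∂x of a function of (x,t). -/
noncomputable def pdx (f : ℝ → ℝ → ℝ) (x t : ℝ) : ℝ := deriv (fun x' => f x' t) x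

/-- ∂/∂t of a function of (x,t). -/
noncomputable def pdt (f : ℝ → ℝ → ℝ) (x t : ℝ) : ℝ := deriv (fun t' => f x t') t

/-- Interface heights `z_{α+1/2} = z_b + Σ_{j=1}^α l_j H`. -/
noncomputable def zhalf (zb : ℝ → ℝ) (H : ℝ → ℝ → ℝ) (l : ℕ → ℝ) (α : ℕ) (x t : ℝ) : ℝ :=
  zb x + ∑ j ∈ Finset.Icc 1 α, l j * H x t

/-- Layer midpoints `z_α = (z_{α+1/2} + z_{α−1/2})/2`. -/
noncomputable def zc (zb : ℝ → ℝ) (H : ℝ → ℝ → ℝ) (l : ℕ → ℝ) (α : ℕ) (x t : ℝ) : ℝ :=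
  (zhalf zb H l α x t + zhalf zb H l (α - 1) x t) / 2

/-- Mass exchange terms `G_{α+1/2} = ∂_t Σ_{j=1}^α h_j + ∂_x Σ_{j=1}^α h_j u_j`. -/
noncomputable def Gex (H : ℝ → ℝ → ℝ) (l : ℕ → ℝ) (u : ℕ → ℝ → ℝ → ℝ) (α : ℕ) (x t : ℝ) : ℝ :=
  deriv (fun t' => ∑ j ∈ Finset.Icc 1 α, l j * H x t') t
    + deriv (fun x' => ∑ j ∈ Finset.Icc 1 α, l j * H x' t * u j x' t) x

/-- the z-moment equation
`∂_t((z_{α+1/2}²−z_{α−1/2}²)/2) + ∂_x((z_{α+1/2}²−z_{α−1/2}²)/2 u_α)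
  = h_α w_α + z_{α+1/2} G_{α+1/2} − z_{α−1/2} G_{α−1/2}`
holds iff `w_α = −(1/2)∂_x(h_α u_α) − Σ_{j<α} ∂_x(h_j u_j) + u_α ∂_x z_α`. -/
theorem stmt13 (N : ℕ) (hN : 1 ≤ N) (l : ℕ → ℝ)
    (hl : ∀ j ∈ Finset.Icc 1 N, 0 < l j) (hlsum : ∑ j ∈ Finset.Icc 1 N, l j = 1)
    (zb : ℝ → ℝ) (H : ℝ → ℝ → ℝ)
    (hzb : ContDiff ℝ (⊤ : ℕ∞) zb)
    (hH : ContDiff ℝ (⊤ : ℕ∞) (fun q : ℝ × ℝ => H q.1 q.2))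
    (hHpos : ∀ x t : ℝ, 0 < H x t)
    (u w : ℕ → ℝ → ℝ → ℝ)
    (hu : ∀ α, ContDiff ℝ (⊤ : ℕ∞) (fun q : ℝ × ℝ => u α q.1 q.2))
    (hw : ∀ α, ContDiff ℝ (⊤ : ℕ∞) (fun q : ℝ × ℝ => w α q.1 q.2)) :
    ∀ α ∈ Finset.Icc 1 N, ∀ x t : ℝ,
      (pdt (fun x' t' => ((zhalf zb H l α x' t') ^ 2 - (zhalf zb H l (α - 1) x' t') ^ 2) / 2) x t
          + pdx (fun x' t' =>
              ((zhalf zb H l α x' t') ^ 2 - (zhalf zb H l (α - 1) x' t') ^ 2) / 2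
                * u α x' t') x t
        = l α * H x t * w α x t
          + zhalf zb H l α x t * Gex H l u α x t
          - zhalf zb H l (α - 1) x t * Gex H l u (α - 1) x t)
      ↔ (w α x t
          = -(1 / 2) * pdx (fun x' t' => l α * H x' t' * u α x' t') x t
            - (∑ j ∈ Finset.Icc 1 (α - 1), pdx (fun x' t' => l j * H x' t' * u j x' t') x t)
            + u α x t * pdx (zc zb H l α) x t) := by
  intro α hα x t
  obtain ⟨hα1, hαN⟩ := Finset.mem_Icc.mp hα
  obtain ⟨β, rfl⟩ : ∃ β, α = β + 1 := ⟨α - 1, (Nat.succ_pred_eq_of_pos hα1).symm⟩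
  have hne : l (β + 1) * H x t ≠ 0 := ne_of_gt (mul_pos (hl _ hα) (hHpos x t))
  -- differentiability of slices
  have hHd := hH.differentiable (by norm_num)
  have hHxd : ∀ s, Differentiable ℝ (fun x' => H x' s) := fun s =>
    hHd.comp (differentiable_id.prodMk (differentiable_const s))
  have hHtd : Differentiable ℝ (fun t' => H x t') :=
    hHd.comp ((differentiable_const x).prodMk differentiable_id)
  have hH1 : HasDerivAt (fun x' => H x' t) (deriv (fun x' => H x' t) x) x :=
    ((hHxd t) x).hasDerivAt
  have hH2 : HasDerivAt (fun t' => H x t') (deriv (fun t' => H x t') t) t :=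
    (hHtd t).hasDerivAt
  have hzb1 : HasDerivAt zb (deriv zb x) x :=
    ((hzb.differentiable (by norm_num)) x).hasDerivAt
  have hu1 : ∀ j, HasDerivAt (fun x' => u j x' t) (deriv (fun x' => u j x' t) x) x := fun j =>
    ((((hu j).differentiable (by norm_num)).comp
      (differentiable_id.prodMk (differentiable_const t))) x).hasDerivAt
  simp only [pdt, pdx, zhalf, zc, Gex, Nat.add_sub_cancel]
  simp only [← Finset.sum_mul]
  set A := ∑ j ∈ Finset.Icc 1 (β + 1), l j with hAdef
  set B := ∑ j ∈ Finset.Icc 1 β, l j with hBdef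
  have hHX := deriv (fun x' => H x' t) x
  -- t-derivative of the z-moment
  have d1 : deriv (fun t' => ((zb x + A * H x t') ^ 2 - (zb x + B * H x t') ^ 2) / 2) t
      = (zb x + A * H x t) * (A * deriv (fun t' => H x t') t)
        - (zb x + B * H x t) * (B * deriv (fun t' => H x t') t) := by
    have h : HasDerivAt (fun t' => ((zb x + A * H x t') ^ 2 - (zb x + B * H x t') ^ 2) / 2) _ t :=
      ((((hH2.const_mul A).const_add (zb x)).pow 2).sub
        (((hH2.const_mul B).const_add (zb x)).pow 2)).div_const 2
    rw [h.deriv]; push_cast; ring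
  -- x-derivative of the z-moment times u
  have d2 : deriv (fun x' =>
        ((zb x' + A * H x' t) ^ 2 - (zb x' + B * H x' t) ^ 2) / 2 * u (β + 1) x' t) x
      = ((zb x + A * H x t) * (deriv zb x + A * deriv (fun x' => H x' t) x)
          - (zb x + B * H x t) * (deriv zb x + B * deriv (fun x' => H x' t) x)) * u (β + 1) x t
        + ((zb x + A * H x t) ^ 2 - (zb x + B * H x t) ^ 2) / 2
            * deriv (fun x' => u (β + 1) x' t) x := by
    have h : HasDerivAt (fun x' =>
        ((zb x' + A * H x' t) ^ 2 - (zb x' + B * H x' t) ^ 2) / 2 * u (β + 1) x' t) _ x :=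
      ((((hzb1.add (hH1.const_mul A)).pow 2).sub
        ((hzb1.add (hH1.const_mul B)).pow 2)).div_const 2).mul (hu1 (β + 1))
    rw [h.deriv]; simp only [Pi.add_apply, Pi.sub_apply, Pi.pow_apply]; push_cast; ring
  -- t-parts of Gex
  have d3 : deriv (fun t' => A * H x t') t = A * deriv (fun t' => H x t') t :=
    (hH2.const_mul A).deriv
  have d3' : deriv (fun t' => B * H x t') t = B * deriv (fun t' => H x t') t :=
    (hH2.const_mul B).deriv
  -- generic x-derivative of h_j u_j
  have dgen : ∀ j, deriv (fun x' => l j * H x' t * u j x' t) x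
      = l j * deriv (fun x' => H x' t) x * u j x t
        + l j * H x t * deriv (fun x' => u j x' t) x := by
    intro j
    have h : HasDerivAt (fun x' => l j * H x' t * u j x' t) _ x :=
      (hH1.const_mul (l j)).mul (hu1 j)
    rw [h.deriv]
  -- x-parts of Gex
  have d4 : ∀ m, deriv (fun x' => ∑ j ∈ Finset.Icc 1 m, l j * H x' t * u j x' t) x
      = ∑ j ∈ Finset.Icc 1 m, (l j * deriv (fun x' => H x' t) x * u j x t
          + l j * H x t * deriv (fun x' => u j x' t) x) := by
    intro m
    have h : HasDerivAt (fun x' => ∑ j ∈ Finset.Icc 1 m, l j * H x' t * u j x' t) _ x :=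
      HasDerivAt.fun_sum (fun j _ => (hH1.const_mul (l j)).mul (hu1 j))
    rw [h.deriv]
  -- derivative of zc
  have d8 : deriv (fun x' => (zb x' + A * H x' t + (zb x' + B * H x' t)) / 2) x
      = (deriv zb x + A * deriv (fun x' => H x' t) x
          + (deriv zb x + B * deriv (fun x' => H x' t) x)) / 2 := by
    have h : HasDerivAt (fun x' => (zb x' + A * H x' t + (zb x' + B * H x' t)) / 2) _ x :=
      ((hzb1.add (hH1.const_mul A)).add (hzb1.add (hH1.const_mul B))).div_const 2
    rw [h.deriv]
  rw [d1, d2, d3, d3', d4, d4, d8]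
  rw [Finset.sum_congr rfl (fun j _ => dgen j), dgen (β + 1)]
  rw [Finset.sum_Icc_succ_top (Nat.le_add_left 1 β)]
  rw [show A = B + l (β + 1) from Finset.sum_Icc_succ_top (Nat.le_add_left 1 β) l]
  set S := ∑ j ∈ Finset.Icc 1 β, (l j * deriv (fun x' => H x' t) x * u j x t
      + l j * H x t * deriv (fun x' => u j x' t) x)
  constructor
  · intro hE
    have h2 : l (β + 1) * H x t * w (β + 1) x t = l (β + 1) * H x t *
        (-(1 / 2) * (l (β + 1) * deriv (fun x' => H x' t) x * u (β + 1) x t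
            + l (β + 1) * H x t * deriv (fun x' => u (β + 1) x' t) x) - S
          + u (β + 1) x t * ((deriv zb x + (B + l (β + 1)) * deriv (fun x' => H x' t) x
              + (deriv zb x + B * deriv (fun x' => H x' t) x)) / 2)) := by
      linear_combination -hE
    exact mul_left_cancel₀ hne h2
  · intro hE
    rw [hE]; ring
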